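/- Let 0 ≤ β ≤ 1 and define g(β) = (1/2)(√((β+4)/β) + 1). Then for γ = (β + 2 − √(β(β+4)))/2 ∈ [0,1], the ratio ((1−γ)/β + 1/2) / (γ²/2 + γ(1−γ) + (1+1/β)(1−γ)²/2) equals g(β); moreover g is decreasing on (0,1] and g(1) = (√5+1)/2. -/
import Mathlib

theorem beta_sort_lower_bound_small_beta
    (β : ℝ) (hβ0 : 0 < β) (hβ1 : β ≤ 1) :
    let g : ℝ → ℝ := fun b => (1 / 2) * (Real.sqrt ((b + 4) / b) + 1)
    let γ : ℝ := (β + 2 - Real.sqrt (β * (β + 4))) / 2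
    (0 ≤ γ ∧ γ ≤ 1) ∧
    ((1 - γ) / β + 1 / 2) /
        (γ ^ 2 / 2 + γ * (1 - γ) + (1 + 1 / β) * (1 - γ) ^ 2 / 2) = g β ∧
    StrictAntiOn g (Set.Ioc (0 : ℝ) 1) ∧
    g 1 = (Real.sqrt 5 + 1) / 2 := by
  intro g γ
  set s := Real.sqrt (β * (β + 4)) with hsdef
  have hs0 : 0 ≤ s := Real.sqrt_nonneg _
  have hs2 : s ^ 2 = β * (β + 4) := Real.sq_sqrt (by positivity)
  have hsle : s ≤ β + 2 := by
    have : s ≤ Real.sqrt ((β + 2) ^ 2) := Real.sqrt_le_sqrt (by nlinarith)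
    rwa [Real.sqrt_sq (by linarith)] at this
  have hβs : β ≤ s := by
    have : Real.sqrt (β ^ 2) ≤ s := Real.sqrt_le_sqrt (by nlinarith)
    rwa [Real.sqrt_sq hβ0.le] at this
  have hsqrt : Real.sqrt ((β + 4) / β) = s / β := by
    have h1 : (β + 4) / β = (s / β) ^ 2 := by
      field_simp
      nlinarith
    rw [h1, Real.sqrt_sq (by positivity)]
  have hγ : γ = (β + 2 - s) / 2 := by rw [hsdef]
  clear_value s
  refine ⟨⟨by rw [hγ]; linarith, by rw [hγ]; linarith⟩, ?_, ?_, ?_⟩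
  · show ((1 - γ) / β + 1 / 2) /
        (γ ^ 2 / 2 + γ * (1 - γ) + (1 + 1 / β) * (1 - γ) ^ 2 / 2)
        = (1 / 2) * (Real.sqrt ((β + 4) / β) + 1)
    rw [hsqrt, hγ]
    have hD : ((β + 2 - s) / 2) ^ 2 / 2 + ((β + 2 - s) / 2) * (1 - (β + 2 - s) / 2)
        + (1 + 1 / β) * (1 - (β + 2 - s) / 2) ^ 2 / 2 = (β + 4 - s) / 4 := by
      field_simp
      nlinarith [hs2]
    have hN : (1 - (β + 2 - s) / 2) / β + 1 / 2 = s / (2 * β) := by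
      field_simp
      ring
    have hden : (0:ℝ) < (β + 4 - s) / 4 := by linarith
    rw [hD, hN, div_eq_iff hden.ne']
    field_simp
    nlinarith [hs2]
  · intro x hx y hy hxy
    simp only [g]
    have hx0 : 0 < x := hx.1
    have hy0 : 0 < y := hy.1
    have : Real.sqrt ((y + 4) / y) < Real.sqrt ((x + 4) / x) := by
      apply Real.sqrt_lt_sqrt (by positivity)
      rw [div_lt_div_iff₀ hy0 hx0]
      nlinarith
    linarith
  · simp only [g]
    norm_num
    ring
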